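/- arXiv:1212.6280 — 4 statements merged into one kernel-verified Lean document; each statement's English description precedes it below -/
import Mathlib

section
/- (Bathtub bound) Let p be a probability density on ℝ^d with p(y) ≤ C almost everywhere, and let 0 ≤ a < d. Then ∫_{ℝ^d} p(y)/|y|^a dy ≤ (d/(d−a)) · (C·|S^{d−1}|/d)^{a/d}, where |S^{d−1}| is the surface area of the unit sphere in ℝ^d. -/
open Real MeasureTheory Metric Set

private lemma integrable_subtype_comap_iff {α : Type*} [MeasurableSpace α] {μ : Measure α}
    {s : Set α} (hs : MeasurableSet s) (f : α → ℝ) :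
    Integrable (fun x : s => f x) (μ.comap Subtype.val) ↔ IntegrableOn f s μ := by
  rw [IntegrableOn, ← map_comap_subtype_coe hs μ,
    (MeasurableEmbedding.subtype_coe hs).integrable_map_iff]
  exact Iff.rfl

private lemma bathtub_aux {d : ℕ} (hd : 1 ≤ d) {a R : ℝ} (ha : 0 ≤ a) (had : a < (d : ℝ))
    (hR : 0 < R) :
    Integrable (fun x : EuclideanSpace ℝ (Fin d) => if ‖x‖ < R then ‖x‖ ^ (-a) else 0) ∧
      ∫ x : EuclideanSpace ℝ (Fin d), (if ‖x‖ < R then ‖x‖ ^ (-a) else 0) =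
        (d : ℝ) * (volume (ball (0 : EuclideanSpace ℝ (Fin d)) 1)).toReal *
          (R ^ ((d : ℝ) - a) / ((d : ℝ) - a)) := by
  classical
  have hdim : Module.finrank ℝ (EuclideanSpace ℝ (Fin d)) = d := finrank_euclideanSpace_fin
  haveI : Nontrivial (EuclideanSpace ℝ (Fin d)) :=
    Module.nontrivial_of_finrank_pos (R := ℝ) (by rw [hdim]; omega)
  set g : ℝ → ℝ := fun r => if r < R then r ^ (-a) else 0 with hgdef
  have hn' : ((Module.finrank ℝ (EuclideanSpace ℝ (Fin d)) - 1 : ℕ) : ℝ) = (d : ℝ) - 1 := by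
    rw [hdim, Nat.cast_sub hd, Nat.cast_one]
  have h1 : IntegrableOn (fun r : ℝ => r ^ ((d : ℝ) - 1 - a)) (Ioo 0 R) := by
    rw [intervalIntegral.integrableOn_Ioo_rpow_iff hR]
    have : (1 : ℝ) ≤ d := by exact_mod_cast hd
    linarith
  have hcong : ∀ r ∈ Ioi (0 : ℝ),
      g r * r ^ (Module.finrank ℝ (EuclideanSpace ℝ (Fin d)) - 1)
        = (Ioo (0 : ℝ) R).indicator (fun r => r ^ ((d : ℝ) - 1 - a)) r := by
    intro r hr
    rcases lt_or_ge r R with h | h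
    · rw [indicator_of_mem (show r ∈ Ioo 0 R from ⟨hr, h⟩) (fun r : ℝ => r ^ ((d : ℝ) - 1 - a))]
      have hg : g r = r ^ (-a) := if_pos h
      rw [hg, ← Real.rpow_natCast r (Module.finrank ℝ (EuclideanSpace ℝ (Fin d)) - 1),
        ← Real.rpow_add hr, hn']
      congr 1
      ring
    · rw [indicator_of_notMem (fun hm => absurd hm.2 (not_lt.2 h))]
      have hg : g r = 0 := if_neg (not_lt.2 h)
      rw [hg, zero_mul]
  have h2 : IntegrableOn
      (fun r : ℝ => g r * r ^ (Module.finrank ℝ (EuclideanSpace ℝ (Fin d)) - 1)) (Ioi 0) := by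
    have hind : Integrable ((Ioo (0 : ℝ) R).indicator (fun r => r ^ ((d : ℝ) - 1 - a))) volume :=
      (integrable_indicator_iff measurableSet_Ioo).2 h1
    exact (hind.restrict (s := Ioi 0)).congr <| by
      filter_upwards [ae_restrict_mem measurableSet_Ioi] with r hr
      exact (hcong r hr).symm
  have h3 : ∫ r in Ioi (0 : ℝ),
      g r * r ^ (Module.finrank ℝ (EuclideanSpace ℝ (Fin d)) - 1)
        = R ^ ((d : ℝ) - a) / ((d : ℝ) - a) := by
    rw [setIntegral_congr_fun measurableSet_Ioi hcong,
      integral_indicator measurableSet_Ioo, Measure.restrict_restrict measurableSet_Ioo,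
      show Ioo (0 : ℝ) R ∩ Ioi 0 = Ioo 0 R from inter_eq_left.2 Ioo_subset_Ioi_self,
      ← integral_Ioc_eq_integral_Ioo, ← intervalIntegral.integral_of_le hR.le,
      integral_rpow (Or.inl (by linarith : (-1 : ℝ) < (d : ℝ) - 1 - a))]
    rw [show (d : ℝ) - 1 - a + 1 = (d : ℝ) - a by ring,
      Real.zero_rpow (sub_ne_zero_of_ne had.ne'), sub_zero]
  -- integrability with respect to volumeIoiPow
  have hig : Integrable (fun r : Ioi (0 : ℝ) => g r)
      (Measure.volumeIoiPow (Module.finrank ℝ (EuclideanSpace ℝ (Fin d)) - 1)) := by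
    rw [Measure.volumeIoiPow, integrable_withDensity_iff
      ((measurable_subtype_coe.pow_const _).ennreal_ofReal)
      (ae_of_all _ fun r => ENNReal.ofReal_lt_top)]
    have heq : (fun r : Ioi (0 : ℝ) => g r *
          (ENNReal.ofReal ((r : ℝ) ^ (Module.finrank ℝ (EuclideanSpace ℝ (Fin d)) - 1))).toReal)
        = fun r : Ioi (0 : ℝ) =>
            (fun s : ℝ => g s * s ^ (Module.finrank ℝ (EuclideanSpace ℝ (Fin d)) - 1)) (r : ℝ) := by
      funext r
      simp only [ENNReal.toReal_ofReal (pow_nonneg (le_of_lt r.2) _)]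
    rw [heq]
    exact (integrable_subtype_comap_iff measurableSet_Ioi _).2 h2
  have key : Integrable (fun q : sphere (0 : EuclideanSpace ℝ (Fin d)) 1 × Ioi (0 : ℝ) => g q.2)
      ((volume : Measure (EuclideanSpace ℝ (Fin d))).toSphere.prod
        (Measure.volumeIoiPow (Module.finrank ℝ (EuclideanSpace ℝ (Fin d)) - 1))) := by
    have h4 := (integrable_const (μ := (volume : Measure (EuclideanSpace ℝ (Fin d))).toSphere)
      (c := (1 : ℝ))).mul_prod hig
    simpa using h4
  have hmp :=
    (volume : Measure (EuclideanSpace ℝ (Fin d))).measurePreserving_homeomorphUnitSphereProd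
  have hInt0 : Integrable
      (fun x : ({(0 : EuclideanSpace ℝ (Fin d))}ᶜ : Set (EuclideanSpace ℝ (Fin d))) =>
        g ‖(x : EuclideanSpace ℝ (Fin d))‖) (volume.comap Subtype.val) := by
    have h5 := (hmp.integrable_comp_emb (Homeomorph.measurableEmbedding _)).2 key
    convert h5 using 1
    funext x
    simp [homeomorphUnitSphereProd]
  have hInt : Integrable (fun x : EuclideanSpace ℝ (Fin d) => g ‖x‖) volume := by
    have h4 : IntegrableOn (fun x : EuclideanSpace ℝ (Fin d) => g ‖x‖)
        ({(0 : EuclideanSpace ℝ (Fin d))}ᶜ) volume :=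
      (integrable_subtype_comap_iff (measurableSet_singleton _).compl _).1 hInt0
    rwa [IntegrableOn, restrict_compl_singleton] at h4
  have hval := integral_fun_norm_addHaar (volume : Measure (EuclideanSpace ℝ (Fin d))) g
  refine ⟨hInt, ?_⟩
  have hshow : (fun x : EuclideanSpace ℝ (Fin d) => if ‖x‖ < R then ‖x‖ ^ (-a) else 0)
      = fun x : EuclideanSpace ℝ (Fin d) => g ‖x‖ := rfl
  rw [hshow, hval]
  have hsm : (∫ r in Ioi (0 : ℝ),
        r ^ (Module.finrank ℝ (EuclideanSpace ℝ (Fin d)) - 1) • g r)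
      = R ^ ((d : ℝ) - a) / ((d : ℝ) - a) := by
    rw [← h3]
    apply setIntegral_congr_fun measurableSet_Ioi
    intro r hr
    simp [smul_eq_mul, mul_comm]
  rw [hsm, hdim, nsmul_eq_mul, smul_eq_mul, measureReal_def]
  ring

/-- Bathtub bound: if `p` is a probability density on `ℝ^d` with `p ≤ C` a.e.
and `0 ≤ a < d`, then `∫ p(y)/|y|^a dy ≤ (d/(d−a)) (C |S^{d-1}| / d)^{a/d}`,
where `|S^{d-1}| = 2π^{d/2}/Γ(d/2)`. -/
theorem bathtub_bound (d : ℕ) (hd : 1 ≤ d) (a C : ℝ) (ha : 0 ≤ a) (had : a < d)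
    (p : EuclideanSpace ℝ (Fin d) → ℝ) (hmeas : Measurable p)
    (hnn : ∀ y, 0 ≤ p y) (hnorm : ∫ y, p y = 1)
    (hC : ∀ᵐ y : EuclideanSpace ℝ (Fin d), p y ≤ C) :
    ∫ y : EuclideanSpace ℝ (Fin d), p y / ‖y‖ ^ a ≤
      ((d : ℝ) / ((d : ℝ) - a)) *
        (C * (2 * Real.pi ^ ((d : ℝ) / 2) / Real.Gamma ((d : ℝ) / 2)) / d) ^ (a / (d : ℝ)) := by
  classical
  have hdim : Module.finrank ℝ (EuclideanSpace ℝ (Fin d)) = d := finrank_euclideanSpace_fin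
  haveI : Nontrivial (EuclideanSpace ℝ (Fin d)) :=
    Module.nontrivial_of_finrank_pos (R := ℝ) (by rw [hdim]; omega)
  have hdR : (0 : ℝ) < d := by exact_mod_cast Nat.pos_of_ne_zero (by omega)
  have hdne : (d : ℝ) ≠ 0 := ne_of_gt hdR
  have hdane : (d : ℝ) - a ≠ 0 := sub_ne_zero_of_ne had.ne'
  have hpint : Integrable p := by
    by_contra h
    rw [integral_undef h] at hnorm
    norm_num at hnorm
  have hC0 : 0 < C := by
    by_contra h
    push_neg at h
    have hz : p =ᵐ[volume] 0 := by
      filter_upwards [hC] with y hy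
      have : p y = 0 := le_antisymm (hy.trans h) (hnn y)
      simpa using this
    rw [integral_congr_ae hz] at hnorm
    simp at hnorm
  have hΓ2 : 0 < Real.Gamma ((d : ℝ) / 2) := Real.Gamma_pos_of_pos (by positivity)
  have hΓ : 0 < Real.Gamma ((d : ℝ) / 2 + 1) := Real.Gamma_pos_of_pos (by positivity)
  set w : ℝ := Real.sqrt π ^ d / Real.Gamma ((d : ℝ) / 2 + 1) with hw
  have hw0 : 0 < w := by
    rw [hw]
    have hsp : 0 < Real.sqrt π := Real.sqrt_pos.2 pi_pos
    positivity
  set K : ℝ := C * w with hK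
  have hK0 : 0 < K := mul_pos hC0 hw0
  set R : ℝ := K ^ (-(1 / (d : ℝ))) with hR
  have hR0 : 0 < R := Real.rpow_pos_of_pos hK0 _
  have hRd : R ^ (d : ℕ) = K⁻¹ := by
    rw [hR, ← Real.rpow_natCast (K ^ (-(1 / (d : ℝ)))) d, ← Real.rpow_mul hK0.le,
      show -(1 / (d : ℝ)) * (d : ℝ) = -1 by field_simp]
    exact Real.rpow_neg_one K
  haveI : Nonempty (Fin d) := ⟨⟨0, by omega⟩⟩
  have hvol1 : (volume (ball (0 : EuclideanSpace ℝ (Fin d)) 1)).toReal = w := by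
    rw [EuclideanSpace.volume_ball, Fintype.card_fin, ENNReal.ofReal_one, one_pow, one_mul,
      ENNReal.toReal_ofReal (by positivity)]
  have hvolR : (volume (ball (0 : EuclideanSpace ℝ (Fin d)) R)).toReal = R ^ (d : ℕ) * w := by
    rw [EuclideanSpace.volume_ball, Fintype.card_fin, ENNReal.toReal_mul, ENNReal.toReal_pow,
      ENNReal.toReal_ofReal hR0.le, ENNReal.toReal_ofReal (by positivity)]
  have hCvol : C * (volume (ball (0 : EuclideanSpace ℝ (Fin d)) R)).toReal = 1 := by
    rw [hvolR, hRd, hK]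
    field_simp
  obtain ⟨hhint, hhval⟩ := bathtub_aux hd ha had hR0
  rw [hvol1] at hhval
  have hind_int : Integrable ((ball (0 : EuclideanSpace ℝ (Fin d)) R).indicator
      (fun _ => (1 : ℝ))) :=
    (integrable_indicator_iff measurableSet_ball).2
      (integrableOn_const measure_ball_lt_top.ne)
  have hq_int : Integrable (fun y : EuclideanSpace ℝ (Fin d) =>
      C * (if ‖y‖ < R then ‖y‖ ^ (-a) else 0) +
        R ^ (-a) * (p y - C * (ball (0 : EuclideanSpace ℝ (Fin d)) R).indicator
          (fun _ => (1 : ℝ)) y)) :=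
    (hhint.const_mul C).add ((hpint.sub (hind_int.const_mul C)).const_mul _)
  have h0 : ∀ᵐ y : EuclideanSpace ℝ (Fin d), y ≠ 0 := by
    have hset : {y : EuclideanSpace ℝ (Fin d) | ¬ y ≠ 0} = {0} := by ext y; simp
    rw [ae_iff, hset]
    exact measure_singleton 0
  have hae : ∀ᵐ y : EuclideanSpace ℝ (Fin d), p y * ‖y‖ ^ (-a) ≤
      C * (if ‖y‖ < R then ‖y‖ ^ (-a) else 0) +
        R ^ (-a) * (p y - C * (ball (0 : EuclideanSpace ℝ (Fin d)) R).indicator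
          (fun _ => (1 : ℝ)) y) := by
    filter_upwards [hC, h0] with y hy hy0
    have hny : 0 < ‖y‖ := norm_pos_iff.mpr hy0
    by_cases hlt : ‖y‖ < R
    · have hmem : y ∈ ball (0 : EuclideanSpace ℝ (Fin d)) R := mem_ball_zero_iff.mpr hlt
      rw [if_pos hlt, indicator_of_mem hmem]
      have hfy : R ^ (-a) ≤ ‖y‖ ^ (-a) :=
        Real.rpow_le_rpow_of_nonpos hny hlt.le (neg_nonpos.mpr ha)
      nlinarith [mul_nonneg (sub_nonneg.2 hy) (sub_nonneg.2 hfy)]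
    · have hmem : y ∉ ball (0 : EuclideanSpace ℝ (Fin d)) R :=
        fun hm => hlt (mem_ball_zero_iff.mp hm)
      rw [if_neg hlt, indicator_of_notMem hmem]
      have hfy : ‖y‖ ^ (-a) ≤ R ^ (-a) :=
        Real.rpow_le_rpow_of_nonpos hR0 (not_lt.1 hlt) (neg_nonpos.mpr ha)
      nlinarith [mul_le_mul_of_nonneg_left hfy (hnn y)]
  have hfmeas : Measurable fun y : EuclideanSpace ℝ (Fin d) => ‖y‖ ^ (-a) := by fun_prop
  have hlint : Integrable (fun y : EuclideanSpace ℝ (Fin d) => p y * ‖y‖ ^ (-a)) := by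
    refine hq_int.mono' ((hmeas.mul hfmeas).aestronglyMeasurable) ?_
    filter_upwards [hae] with y hy
    rwa [Real.norm_of_nonneg (mul_nonneg (hnn y) (Real.rpow_nonneg (norm_nonneg y) _))]
  have hbase : C * (2 * Real.pi ^ ((d : ℝ) / 2) / Real.Gamma ((d : ℝ) / 2)) / d = K := by
    have hsq : Real.sqrt π ^ d = π ^ ((d : ℝ) / 2) := by
      rw [Real.sqrt_eq_rpow, ← Real.rpow_natCast (π ^ ((1 : ℝ) / 2)) d,
        ← Real.rpow_mul pi_pos.le]
      congr 1
      ring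
    have hΓ1 : Real.Gamma ((d : ℝ) / 2 + 1) = ((d : ℝ) / 2) * Real.Gamma ((d : ℝ) / 2) :=
      Real.Gamma_add_one (by positivity)
    rw [hK, hw, hsq, hΓ1]
    field_simp
  have hpow : K * R ^ ((d : ℝ) - a) = K ^ (a / (d : ℝ)) := by
    rw [hR, ← Real.rpow_mul hK0.le,
      show (a / (d : ℝ)) = 1 + (-(1 / (d : ℝ)) * ((d : ℝ) - a)) by field_simp; ring,
      Real.rpow_add hK0, Real.rpow_one]
  calc ∫ y : EuclideanSpace ℝ (Fin d), p y / ‖y‖ ^ a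
      = ∫ y : EuclideanSpace ℝ (Fin d), p y * ‖y‖ ^ (-a) := by
        apply integral_congr_ae
        apply ae_of_all
        intro y
        show p y / ‖y‖ ^ a = p y * ‖y‖ ^ (-a)
        rw [Real.rpow_neg (norm_nonneg y), div_eq_mul_inv]
    _ ≤ ∫ y : EuclideanSpace ℝ (Fin d),
          (C * (if ‖y‖ < R then ‖y‖ ^ (-a) else 0) +
            R ^ (-a) * (p y - C * (ball (0 : EuclideanSpace ℝ (Fin d)) R).indicator
              (fun _ => (1 : ℝ)) y)) := integral_mono_ae hlint hq_int hae
    _ = C * ∫ y : EuclideanSpace ℝ (Fin d), (if ‖y‖ < R then ‖y‖ ^ (-a) else 0) := by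
        have hsub : Integrable (fun y : EuclideanSpace ℝ (Fin d) =>
            p y - C * (ball (0 : EuclideanSpace ℝ (Fin d)) R).indicator (fun _ => (1 : ℝ)) y) :=
          hpint.sub (hind_int.const_mul C)
        rw [integral_add (hhint.const_mul C) (hsub.const_mul _),
          integral_const_mul _, integral_const_mul _,
          integral_sub hpint (hind_int.const_mul C), integral_const_mul _,
          integral_indicator_const _ measurableSet_ball, hnorm, smul_eq_mul, mul_one,
          measureReal_def, hCvol, sub_self, mul_zero, add_zero]
    _ = (d : ℝ) / ((d : ℝ) - a) * K ^ (a / (d : ℝ)) := by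
        rw [hhval, ← hpow, hK]
        field_simp
    _ = ((d : ℝ) / ((d : ℝ) - a)) *
        (C * (2 * Real.pi ^ ((d : ℝ) / 2) / Real.Gamma ((d : ℝ) / 2)) / d) ^ (a / (d : ℝ)) := by
        rw [hbase]
end

section
/- If p is a probability density on ℝ^d bounded by C with ∫ |y|² p(y) dy = m < ∞, then the second moments m_N := ∫ |w|² γ_N(w) dw of the tilted densities γ_N(w) := p(w)|w|^{−a/N} / ∫ p(w')|w'|^{−a/N} dw' (for fixed a > 0) converge to m as N → ∞. -/
open Real MeasureTheory Filter Set Metric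
open scoped ENNReal Topology

lemma integrableOn_rpow_ball (d : ℕ) (hd : 1 ≤ d) {s : ℝ} (hs0 : 0 < s)
    (hsd : s < d) :
    IntegrableOn (fun w : EuclideanSpace ℝ (Fin d) => ‖w‖ ^ (-s))
      (Metric.ball 0 1) := by
  have hmeas : Measurable fun w : EuclideanSpace ℝ (Fin d) => ‖w‖ ^ (-s) := by
    fun_prop
  constructor
  · exact hmeas.aestronglyMeasurable.restrict
  · rw [HasFiniteIntegral,
      lintegral_enorm_of_nonneg (fun w => rpow_nonneg (norm_nonneg w) _)]
    rw [lintegral_eq_lintegral_meas_le _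
      (Eventually.of_forall (fun w => rpow_nonneg (norm_nonneg w) _))
      hmeas.aemeasurable]
    set mB := volume (Metric.ball (0 : EuclideanSpace ℝ (Fin d)) 1) with hmB
    have hmBlt : mB < ∞ := measure_ball_lt_top
    have hbound : ∀ t ∈ Ioi (0:ℝ),
        (volume.restrict (Metric.ball (0 : EuclideanSpace ℝ (Fin d)) 1))
          {a | t ≤ ‖a‖ ^ (-s)} ≤
          ENNReal.ofReal (t ^ (-(s⁻¹ * d))) * mB := by
      intro t ht
      have ht0 : (0:ℝ) < t := ht
      have hsub : {a : EuclideanSpace ℝ (Fin d) | t ≤ ‖a‖ ^ (-s)} ⊆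
          Metric.closedBall 0 (t ^ (-s⁻¹)) := by
        intro x hx
        simp only [mem_setOf_eq] at hx
        rcases eq_or_ne x 0 with rfl | hx0
        · simp only [norm_zero] at hx
          rw [Real.zero_rpow (by linarith : -s ≠ 0)] at hx
          linarith
        · have hxpos : 0 < ‖x‖ := norm_pos_iff.mpr hx0
          rw [mem_closedBall_zero_iff]
          have key := Real.rpow_le_rpow_of_nonpos ht0 hx
            (neg_nonpos.mpr (inv_nonneg.mpr hs0.le))
          calc ‖x‖ = ‖x‖ ^ ((-s) * (-s⁻¹)) := by
                rw [neg_mul_neg, mul_inv_cancel₀ hs0.ne', Real.rpow_one]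
            _ = (‖x‖ ^ (-s)) ^ (-s⁻¹) := Real.rpow_mul (norm_nonneg x) _ _
            _ ≤ t ^ (-s⁻¹) := key
      calc (volume.restrict (Metric.ball (0 : EuclideanSpace ℝ (Fin d)) 1))
            {a | t ≤ ‖a‖ ^ (-s)}
          ≤ volume (Metric.closedBall (0 : EuclideanSpace ℝ (Fin d)) (t ^ (-s⁻¹))) :=
            le_trans (Measure.restrict_apply_le _ _) (measure_mono hsub)
        _ = ENNReal.ofReal ((t ^ (-s⁻¹)) ^ (Module.finrank ℝ (EuclideanSpace ℝ (Fin d)))) * mB :=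
            Measure.addHaar_closedBall (μ := volume) 0 (rpow_nonneg ht0.le _)
        _ = ENNReal.ofReal (t ^ (-(s⁻¹ * d))) * mB := by
            congr 1
            rw [finrank_euclideanSpace, Fintype.card_fin, ← Real.rpow_natCast (t ^ (-s⁻¹)) d,
              ← Real.rpow_mul ht0.le]
            ring_nf
    calc ∫⁻ t in Ioi (0:ℝ), (volume.restrict (Metric.ball (0 : EuclideanSpace ℝ (Fin d)) 1))
          {a | t ≤ ‖a‖ ^ (-s)}
        ≤ (∫⁻ t in Ioc (0:ℝ) 1, (volume.restrict (Metric.ball (0 : EuclideanSpace ℝ (Fin d)) 1))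
            {a | t ≤ ‖a‖ ^ (-s)}) +
          ∫⁻ t in Ioi (1:ℝ), (volume.restrict (Metric.ball (0 : EuclideanSpace ℝ (Fin d)) 1))
            {a | t ≤ ‖a‖ ^ (-s)} := by
          exact le_trans (lintegral_mono_set Ioi_subset_Ioc_union_Ioi)
            (lintegral_union_le _ _ _)
      _ < ⊤ := by
          refine ENNReal.add_lt_top.2 ⟨?_, ?_⟩
          · calc ∫⁻ t in Ioc (0:ℝ) 1, (volume.restrict (Metric.ball (0 : EuclideanSpace ℝ (Fin d)) 1))
                  {a | t ≤ ‖a‖ ^ (-s)}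
                ≤ ∫⁻ _t in Ioc (0:ℝ) 1, mB := by
                  refine setLIntegral_mono' measurableSet_Ioc fun t ht => ?_
                  exact le_trans (measure_mono (subset_univ _))
                    (le_of_eq (Measure.restrict_apply_univ _))
              _ = mB * volume (Ioc (0:ℝ) 1) := by rw [setLIntegral_const]
              _ < ⊤ := by
                  refine ENNReal.mul_lt_top hmBlt ?_
                  simp [Real.volume_Ioc]
          · calc ∫⁻ t in Ioi (1:ℝ), (volume.restrict (Metric.ball (0 : EuclideanSpace ℝ (Fin d)) 1))
                  {a | t ≤ ‖a‖ ^ (-s)}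
                ≤ ∫⁻ t in Ioi (1:ℝ), ENNReal.ofReal (t ^ (-(s⁻¹ * d))) * mB := by
                  refine setLIntegral_mono' measurableSet_Ioi fun t ht => ?_
                  exact hbound t (show (0:ℝ) < t from lt_trans one_pos ht)
              _ = (∫⁻ t in Ioi (1:ℝ), ENNReal.ofReal (t ^ (-(s⁻¹ * d)))) * mB :=
                  lintegral_mul_const' _ _ hmBlt.ne
              _ < ⊤ := by
                  refine ENNReal.mul_lt_top ?_ hmBlt
                  refine IntegrableOn.setLIntegral_lt_top ?_
                  refine integrableOn_Ioi_rpow_of_lt ?_ one_pos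
                  rw [neg_lt_neg_iff]
                  calc (1:ℝ) < d / s := (one_lt_div hs0).mpr hsd
                    _ = s⁻¹ * d := div_eq_inv_mul _ _


/-- The second moments of the tilted densities
`γ_N(w) = p(w)|w|^{-a/N} / ∫ p|·|^{-a/N}` converge to the second moment of `p`. -/
theorem tilted_second_moment_tendsto (d : ℕ) (hd : 1 ≤ d) (a C : ℝ) (ha : 0 < a)
    (p : EuclideanSpace ℝ (Fin d) → ℝ) (hmeas : Measurable p)
    (hnn : ∀ y, 0 ≤ p y) (hC : ∀ y, p y ≤ C) (hnorm : ∫ y, p y = 1)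
    (m : ℝ) (h2 : Integrable fun y : EuclideanSpace ℝ (Fin d) => ‖y‖ ^ 2 * p y)
    (hm : m = ∫ y : EuclideanSpace ℝ (Fin d), ‖y‖ ^ 2 * p y) :
    Tendsto (fun N : ℕ =>
        (∫ w : EuclideanSpace ℝ (Fin d), ‖w‖ ^ 2 * (p w * ‖w‖ ^ (-(a / (N : ℝ))))) /
          ∫ w : EuclideanSpace ℝ (Fin d), p w * ‖w‖ ^ (-(a / (N : ℝ))))
      atTop (nhds m) := by
  haveI : Nonempty (Fin d) := ⟨⟨0, hd⟩⟩
  let E := EuclideanSpace ℝ (Fin d)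
  -- `p` is integrable
  have hp_int : Integrable p := by
    by_contra h
    rw [integral_undef h] at hnorm
    norm_num at hnorm
  have hC0 : (0:ℝ) ≤ C := le_trans (hnn 0) (hC 0)
  -- the fixed exponent
  set N₀ : ℕ := ⌈a⌉₊ + 1 with hN₀
  have hN₀pos : (0:ℝ) < N₀ := by positivity
  have haN₀ : a < N₀ := lt_of_le_of_lt (Nat.le_ceil a) (by exact_mod_cast Nat.lt_succ_self _)
  set s : ℝ := a / N₀ with hs
  have hs0 : 0 < s := div_pos ha hN₀pos
  have hs1 : s < 1 := (div_lt_one hN₀pos).mpr haN₀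
  have hsd : s < d := lt_of_lt_of_le hs1 (by exact_mod_cast hd)
  -- measurability of the integrands
  have hFmeas : ∀ c : ℝ, Measurable fun w : E => p w * ‖w‖ ^ c := fun c =>
    hmeas.mul (by fun_prop : Measurable fun w : E => ‖w‖ ^ c)
  -- integrability of the dominating functions
  have hball := integrableOn_rpow_ball d hd hs0 hsd
  have hint : Integrable (fun w : E => p w * ‖w‖ ^ (-s)) := by
    rw [← integrableOn_univ, ← Set.union_compl_self (Metric.ball (0:E) 1)]
    refine IntegrableOn.union ?_ ?_
    · refine Integrable.mono (hball.const_mul C) ((hFmeas _).aestronglyMeasurable.restrict)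
        (ae_of_all _ fun w => ?_)
      rw [Real.norm_eq_abs, Real.norm_eq_abs,
        abs_of_nonneg (mul_nonneg (hnn w) (rpow_nonneg (norm_nonneg w) _)),
        abs_of_nonneg (mul_nonneg hC0 (rpow_nonneg (norm_nonneg w) _))]
      exact mul_le_mul_of_nonneg_right (hC w) (rpow_nonneg (norm_nonneg w) _)
    · refine Integrable.mono hp_int.integrableOn ((hFmeas _).aestronglyMeasurable.restrict)
        ((ae_restrict_iff' (measurableSet_ball.compl)).2 (ae_of_all _ fun w hw => ?_))
      have hw1 : 1 ≤ ‖w‖ := by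
        simpa [Metric.mem_ball, dist_zero_right] using hw
      rw [Real.norm_eq_abs, Real.norm_eq_abs,
        abs_of_nonneg (mul_nonneg (hnn w) (rpow_nonneg (norm_nonneg w) _)),
        abs_of_nonneg (hnn w)]
      calc p w * ‖w‖ ^ (-s) ≤ p w * 1 :=
            mul_le_mul_of_nonneg_left
              (Real.rpow_le_one_of_one_le_of_nonpos hw1 (by linarith)) (hnn w)
        _ = p w := mul_one _
  have hint2 : Integrable (fun w : E => ‖w‖ ^ 2 * (p w * ‖w‖ ^ (-s))) := by
    rw [← integrableOn_univ, ← Set.union_compl_self (Metric.ball (0:E) 1)]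
    refine IntegrableOn.union ?_ ?_
    · refine Integrable.mono (hball.const_mul C)
        ((by fun_prop : Measurable fun w : E => ‖w‖ ^ 2 * (p w * ‖w‖ ^ (-s))).aestronglyMeasurable.restrict)
        ((ae_restrict_iff' measurableSet_ball).2 (ae_of_all _ fun w hw => ?_))
      have hw1 : ‖w‖ ≤ 1 :=
        le_of_lt (by simpa [Metric.mem_ball, dist_zero_right] using hw)
      have h0 : (0:ℝ) ≤ ‖w‖ ^ (-s) := rpow_nonneg (norm_nonneg w) _
      rw [Real.norm_eq_abs, Real.norm_eq_abs,
        abs_of_nonneg (mul_nonneg (by positivity) (mul_nonneg (hnn w) h0)),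
        abs_of_nonneg (mul_nonneg hC0 h0)]
      calc ‖w‖ ^ 2 * (p w * ‖w‖ ^ (-s)) ≤ 1 * (p w * ‖w‖ ^ (-s)) := by
            refine mul_le_mul_of_nonneg_right ?_ (mul_nonneg (hnn w) h0)
            calc ‖w‖ ^ 2 ≤ 1 ^ 2 := by
                  exact pow_le_pow_left₀ (norm_nonneg w) hw1 2
              _ = 1 := one_pow 2
        _ = p w * ‖w‖ ^ (-s) := one_mul _
        _ ≤ C * ‖w‖ ^ (-s) := mul_le_mul_of_nonneg_right (hC w) h0
    · refine Integrable.mono h2.integrableOn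
        ((by fun_prop : Measurable fun w : E => ‖w‖ ^ 2 * (p w * ‖w‖ ^ (-s))).aestronglyMeasurable.restrict)
        ((ae_restrict_iff' (measurableSet_ball.compl)).2 (ae_of_all _ fun w hw => ?_))
      have hw1 : 1 ≤ ‖w‖ := by
        simpa [Metric.mem_ball, dist_zero_right] using hw
      have h0 : (0:ℝ) ≤ ‖w‖ ^ (-s) := rpow_nonneg (norm_nonneg w) _
      rw [Real.norm_eq_abs, Real.norm_eq_abs,
        abs_of_nonneg (mul_nonneg (by positivity) (mul_nonneg (hnn w) h0)),
        abs_of_nonneg (mul_nonneg (by positivity) (hnn w))]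
      calc ‖w‖ ^ 2 * (p w * ‖w‖ ^ (-s)) ≤ ‖w‖ ^ 2 * (p w * 1) := by
            refine mul_le_mul_of_nonneg_left
              (mul_le_mul_of_nonneg_left
                (Real.rpow_le_one_of_one_le_of_nonpos hw1 (by linarith)) (hnn w))
              (by positivity)
        _ = ‖w‖ ^ 2 * p w := by rw [mul_one]
  -- a.e. nonvanishing
  have hae : ∀ᵐ w : E, w ≠ 0 := by
    rw [ae_iff]
    simp only [ne_eq, not_not]
    have : {w : E | w = 0} = {(0:E)} := by ext w; simp
    rw [this]
    exact measure_singleton 0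
  -- pointwise limits
  have hexp : Tendsto (fun N : ℕ => -(a / (N:ℝ))) atTop (𝓝 0) := by
    have := (tendsto_const_div_atTop_nhds_zero_nat a).neg
    simpa using this
  -- domination for large N
  have hdom : ∀ᶠ N : ℕ in atTop, ∀ w : E,
      ‖w‖ ^ (-(a / (N:ℝ))) ≤ 1 + ‖w‖ ^ (-s) := by
    filter_upwards [eventually_ge_atTop N₀] with N hN w
    have hNpos : (0:ℝ) < N := lt_of_lt_of_le hN₀pos (by exact_mod_cast hN)
    have hexp_le : a / N ≤ s := by
      rw [hs]
      exact div_le_div_of_nonneg_left ha.le hN₀pos (by exact_mod_cast hN)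
    rcases le_or_gt ‖w‖ 1 with hw1 | hw1
    · rcases eq_or_lt_of_le (norm_nonneg w) with h0 | h0
      · have hLHS : ‖w‖ ^ (-(a / (N:ℝ))) = 0 := by
          rw [← h0]
          exact Real.zero_rpow (neg_ne_zero.mpr (ne_of_gt (div_pos ha hNpos)))
        rw [hLHS]
        linarith [rpow_nonneg (norm_nonneg w) (-s)]
      · calc ‖w‖ ^ (-(a / (N:ℝ))) ≤ ‖w‖ ^ (-s) :=
              Real.rpow_le_rpow_of_exponent_ge h0 hw1 (by linarith)
          _ ≤ 1 + ‖w‖ ^ (-s) := by linarith [rpow_nonneg (norm_nonneg w) (-s)]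
    · calc ‖w‖ ^ (-(a / (N:ℝ))) ≤ 1 :=
            Real.rpow_le_one_of_one_le_of_nonpos hw1.le
              (neg_nonpos.mpr (div_nonneg ha.le (Nat.cast_nonneg N)))
        _ ≤ 1 + ‖w‖ ^ (-s) := by linarith [rpow_nonneg (norm_nonneg w) (-s)]
  -- denominator converges to 1
  have hden : Tendsto (fun N : ℕ => ∫ w : E, p w * ‖w‖ ^ (-(a / (N:ℝ)))) atTop (𝓝 1) := by
    have key : Tendsto (fun N : ℕ => ∫ w : E, p w * ‖w‖ ^ (-(a / (N:ℝ)))) atTop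
        (𝓝 (∫ w : E, p w)) := by
      refine tendsto_integral_filter_of_dominated_convergence
        (fun w => p w + p w * ‖w‖ ^ (-s)) ?_ ?_ (hp_int.add hint) ?_
      · exact Eventually.of_forall fun N => (hFmeas _).aestronglyMeasurable
      · filter_upwards [hdom] with N hN
        refine ae_of_all _ fun w => ?_
        rw [Real.norm_eq_abs,
          abs_of_nonneg (mul_nonneg (hnn w) (rpow_nonneg (norm_nonneg w) _))]
        calc p w * ‖w‖ ^ (-(a / (N:ℝ))) ≤ p w * (1 + ‖w‖ ^ (-s)) :=
              mul_le_mul_of_nonneg_left (hN w) (hnn w)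
          _ = p w + p w * ‖w‖ ^ (-s) := by ring
      · filter_upwards [hae] with w hw
        have hb : Tendsto (fun N : ℕ => ‖w‖ ^ (-(a / (N:ℝ)))) atTop (𝓝 1) := by
          have := Filter.Tendsto.rpow
            (tendsto_const_nhds : Tendsto (fun _ : ℕ => ‖w‖) atTop (𝓝 ‖w‖)) hexp
            (Or.inl (norm_ne_zero_iff.mpr hw))
          simpa using this
        have := hb.const_mul (p w)
        simpa using this
    rw [hnorm] at key
    exact key
  -- numerator converges to m
  have hnum : Tendsto
      (fun N : ℕ => ∫ w : E, ‖w‖ ^ 2 * (p w * ‖w‖ ^ (-(a / (N:ℝ))))) atTop (𝓝 m) := by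
    have key : Tendsto
        (fun N : ℕ => ∫ w : E, ‖w‖ ^ 2 * (p w * ‖w‖ ^ (-(a / (N:ℝ))))) atTop
        (𝓝 (∫ w : E, ‖w‖ ^ 2 * p w)) := by
      refine tendsto_integral_filter_of_dominated_convergence
        (fun w => ‖w‖ ^ 2 * p w + ‖w‖ ^ 2 * (p w * ‖w‖ ^ (-s))) ?_ ?_ (h2.add hint2) ?_
      · exact Eventually.of_forall fun N =>
          ((by fun_prop : Measurable fun w : E => (‖w‖:ℝ) ^ 2).mul
            (hFmeas _)).aestronglyMeasurable
      · filter_upwards [hdom] with N hN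
        refine ae_of_all _ fun w => ?_
        rw [Real.norm_eq_abs,
          abs_of_nonneg (mul_nonneg (by positivity)
            (mul_nonneg (hnn w) (rpow_nonneg (norm_nonneg w) _)))]
        calc ‖w‖ ^ 2 * (p w * ‖w‖ ^ (-(a / (N:ℝ))))
            ≤ ‖w‖ ^ 2 * (p w * (1 + ‖w‖ ^ (-s))) :=
              mul_le_mul_of_nonneg_left
                (mul_le_mul_of_nonneg_left (hN w) (hnn w)) (by positivity)
          _ = ‖w‖ ^ 2 * p w + ‖w‖ ^ 2 * (p w * ‖w‖ ^ (-s)) := by ring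
      · filter_upwards [hae] with w hw
        have hb : Tendsto (fun N : ℕ => ‖w‖ ^ (-(a / (N:ℝ)))) atTop (𝓝 1) := by
          have := Filter.Tendsto.rpow
            (tendsto_const_nhds : Tendsto (fun _ : ℕ => ‖w‖) atTop (𝓝 ‖w‖)) hexp
            (Or.inl (norm_ne_zero_iff.mpr hw))
          simpa using this
        have := (hb.const_mul (p w)).const_mul (‖w‖ ^ 2)
        simpa [mul_assoc] using this
    rw [← hm] at key
    exact key
  have hfinal := hnum.div hden one_ne_zero
  rw [div_one] at hfinal
  exact hfinal
end

section
/- (Jacobian of the mixing change of variables) Fix integers N > k ≥ 1, d ≥ 1. Define the map Φ on vectors Y = (Y_k, Y^k) ∈ ℝ^{dk} × ℝ^{d(N−k)} (with Y ≠ 0, Y^k ≠ 0) by Φ(Y) = (V_k, W^k) where V_k = (√N/|Y|) Y_k and W^k = Y^k. Then |V_k|² = N|Y_k|²/|Y|² < N, and the absolute value of the Jacobian determinant of Φ at Y equals (√N/|Y|)^{dk} · |Y^k|²/|Y|². -/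
open Real MeasureTheory Matrix


section aux
variable {n1 n2 : ℕ}

noncomputable abbrev E' (n : ℕ) := EuclideanSpace ℝ (Fin n)

/-- determinant of the linear map `(x, y) ↦ (f • x + (c * (2⟪a,x⟫+2⟪b,y⟫)) • a, y)`. -/
lemma det_aux (f c : ℝ) (hf : f ≠ 0) (a : E' n1) (b : E' n2)
    (L : (E' n1 × E' n2) →ₗ[ℝ] (E' n1 × E' n2))
    (hL : ∀ x : E' n1 × E' n2,
      L x = (f • x.1 + (c * (2 * inner ℝ a x.1 + 2 * inner ℝ b x.2)) • a, x.2)) :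
    LinearMap.det L = f ^ n1 * (1 + (2 * c / f) * ‖a‖ ^ 2) := by
  classical
  set b1 := (EuclideanSpace.basisFun (Fin n1) ℝ).toBasis
  set b2 := (EuclideanSpace.basisFun (Fin n2) ℝ).toBasis
  set B := b1.prod b2
  rw [← LinearMap.det_toMatrix B L]
  have hB1 : ∀ j, B (Sum.inl j) = (EuclideanSpace.single j 1, 0) := by
    intro j
    refine Prod.ext ?_ ?_
    · rw [Module.Basis.prod_apply_inl_fst]
      simp [b1]
    · exact Module.Basis.prod_apply_inl_snd _ _ _
  have hB2 : ∀ j, B (Sum.inr j) = (0, EuclideanSpace.single j 1) := by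
    intro j
    refine Prod.ext ?_ ?_
    · exact Module.Basis.prod_apply_inr_fst _ _ _
    · rw [Module.Basis.prod_apply_inr_snd]
      simp [b2]
  have hM : LinearMap.toMatrix B B L =
      Matrix.fromBlocks
        (f • (1 + Matrix.replicateCol Unit (fun i => a i) *
          Matrix.replicateRow Unit (fun j => (2 * c / f) * a j)))
        (Matrix.of fun i j => (c * (2 * b j)) * a i) 0 1 := by
    ext i j
    rcases i with i | i <;> rcases j with j | j <;>
      rw [LinearMap.toMatrix_apply]
    · rw [hB1, hL]
      simp only [B, Module.Basis.prod_repr_inl]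
      have : inner ℝ a (EuclideanSpace.single j (1:ℝ)) = a j := by
        simp [EuclideanSpace.inner_single_right]
      rw [this]
      simp only [inner_zero_right, mul_zero, add_zero, b1,
        OrthonormalBasis.coe_toBasis_repr_apply, EuclideanSpace.basisFun_repr,
        Matrix.fromBlocks_apply₁₁]
      simp only [Matrix.smul_apply, Matrix.add_apply, Matrix.one_apply,
        Matrix.mul_apply, Finset.univ_unique, Finset.sum_singleton,
        Matrix.replicateCol_apply, Matrix.replicateRow_apply, smul_eq_mul]
      have hsingle : (EuclideanSpace.single j (1:ℝ) : EuclideanSpace ℝ (Fin n1)) i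
          = if i = j then 1 else 0 := by
        simp [EuclideanSpace.single_apply, eq_comm]
      simp only [PiLp.add_apply, PiLp.smul_apply, smul_eq_mul, hsingle]
      field_simp
    · rw [hB2, hL]
      simp only [B, Module.Basis.prod_repr_inl]
      simp only [inner_zero_right, mul_zero, zero_add, smul_zero, b1,
        OrthonormalBasis.coe_toBasis_repr_apply, EuclideanSpace.basisFun_repr,
        Matrix.fromBlocks_apply₁₂]
      have : inner ℝ b (EuclideanSpace.single j (1:ℝ)) = b j := by
        simp [EuclideanSpace.inner_single_right]
      rw [this]
      simp [mul_comm]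
    · rw [hB1, hL]
      simp only [B, Module.Basis.prod_repr_inr]
      simp [b2, Matrix.fromBlocks_apply₂₁]
    · rw [hB2, hL]
      simp only [B, Module.Basis.prod_repr_inr]
      simp only [b2, OrthonormalBasis.coe_toBasis_repr_apply,
        EuclideanSpace.basisFun_repr, Matrix.fromBlocks_apply₂₂]
      simp [EuclideanSpace.single_apply, Matrix.one_apply, eq_comm]
  rw [hM, Matrix.det_fromBlocks_zero₂₁, Matrix.det_one, mul_one, Matrix.det_smul,
    Matrix.det_one_add_replicateCol_mul_replicateRow]
  have : (fun j => (2 * c / f) * a j) ⬝ᵥ (fun i => a i) = (2 * c / f) * ‖a‖ ^ 2 := by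
    have h2 : ‖a‖ ^ 2 = ∑ i, a i * a i := by
      rw [← real_inner_self_eq_norm_sq]
      exact PiLp.inner_apply a a
    rw [h2, dotProduct, Finset.mul_sum]
    simp [mul_assoc]
  rw [this]
  simp [Fintype.card_fin]
end aux



set_option maxHeartbeats 1000000 in
/-- Jacobian of the mixing change of variables: for
`Φ(Y_k, Y^k) = ((√N/|Y|) Y_k, Y^k)` (with `|Y|² = |Y_k|² + |Y^k|²`), one has
`|V_k|² = N |Y_k|²/|Y|² < N` and the absolute value of the Jacobian determinant
equals `(√N/|Y|)^{dk} · |Y^k|²/|Y|²`. -/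
theorem mixing_change_of_variables_jacobian (d k N : ℕ) (hd : 1 ≤ d) (hk : 1 ≤ k)
    (hkN : k < N)
    (Φ : EuclideanSpace ℝ (Fin (d * k)) × EuclideanSpace ℝ (Fin (d * (N - k))) →
         EuclideanSpace ℝ (Fin (d * k)) × EuclideanSpace ℝ (Fin (d * (N - k))))
    (hΦ : ∀ Y, Φ Y =
      ((Real.sqrt N / Real.sqrt (‖Y.1‖ ^ 2 + ‖Y.2‖ ^ 2)) • Y.1, Y.2))
    (Y : EuclideanSpace ℝ (Fin (d * k)) × EuclideanSpace ℝ (Fin (d * (N - k))))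
    (hY : Y ≠ 0) (hY2 : Y.2 ≠ 0) :
    ‖(Φ Y).1‖ ^ 2 = N * ‖Y.1‖ ^ 2 / (‖Y.1‖ ^ 2 + ‖Y.2‖ ^ 2) ∧
    ‖(Φ Y).1‖ ^ 2 < N ∧
    |LinearMap.det ((fderiv ℝ Φ Y :
        EuclideanSpace ℝ (Fin (d * k)) × EuclideanSpace ℝ (Fin (d * (N - k))) →L[ℝ]
        EuclideanSpace ℝ (Fin (d * k)) × EuclideanSpace ℝ (Fin (d * (N - k)))) :
        EuclideanSpace ℝ (Fin (d * k)) × EuclideanSpace ℝ (Fin (d * (N - k))) →ₗ[ℝ]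
        EuclideanSpace ℝ (Fin (d * k)) × EuclideanSpace ℝ (Fin (d * (N - k))))| =
      (Real.sqrt N / Real.sqrt (‖Y.1‖ ^ 2 + ‖Y.2‖ ^ 2)) ^ (d * k) *
        (‖Y.2‖ ^ 2 / (‖Y.1‖ ^ 2 + ‖Y.2‖ ^ 2)) := by
  classical
  have hY2pos : (0:ℝ) < ‖Y.2‖ := norm_pos_iff.mpr hY2
  have hS : (0:ℝ) < ‖Y.1‖ ^ 2 + ‖Y.2‖ ^ 2 := by positivity
  set S : ℝ := ‖Y.1‖ ^ 2 + ‖Y.2‖ ^ 2 with hSdef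
  have hsS : (0:ℝ) < Real.sqrt S := Real.sqrt_pos.mpr hS
  have hN1 : (1:ℝ) ≤ (N:ℝ) := by exact_mod_cast Nat.one_le_iff_ne_zero.mpr (by omega)
  have hNpos : (0:ℝ) < (N:ℝ) := lt_of_lt_of_le one_pos hN1
  have hsN : (0:ℝ) < Real.sqrt N := Real.sqrt_pos.mpr hNpos
  set f : ℝ := Real.sqrt N / Real.sqrt S with hfdef
  have hfpos : 0 < f := div_pos hsN hsS
  have hf2 : f ^ 2 = N / S := by
    rw [hfdef, div_pow, Real.sq_sqrt hNpos.le, Real.sq_sqrt hS.le]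
  have part1 : ‖(Φ Y).1‖ ^ 2 = N * ‖Y.1‖ ^ 2 / S := by
    rw [hΦ]
    simp only [norm_smul, mul_pow, Real.norm_eq_abs, sq_abs]
    rw [hf2]
    ring
  refine ⟨part1, ?_, ?_⟩
  · rw [part1, div_lt_iff₀ hS]
    have h1 : ‖Y.1‖ ^ 2 < S := by
      rw [hSdef]; nlinarith
    nlinarith
  -- derivative
  set c' : ℝ := Real.sqrt N * (-(1 / (2 * Real.sqrt S)) / Real.sqrt S ^ 2) with hc'def
  set ψ' : (EuclideanSpace ℝ (Fin (d * k)) × EuclideanSpace ℝ (Fin (d * (N - k)))) →L[ℝ] ℝ :=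
    (2 • (innerSL ℝ Y.1).comp (ContinuousLinearMap.fst ℝ (EuclideanSpace ℝ (Fin (d * k))) (EuclideanSpace ℝ (Fin (d * (N - k)))))) +
    (2 • (innerSL ℝ Y.2).comp (ContinuousLinearMap.snd ℝ (EuclideanSpace ℝ (Fin (d * k))) (EuclideanSpace ℝ (Fin (d * (N - k)))))) with hψ'def
  have hψ : HasFDerivAt (fun Z : EuclideanSpace ℝ (Fin (d * k)) × EuclideanSpace ℝ (Fin (d * (N - k))) => ‖Z.1‖ ^ 2 + ‖Z.2‖ ^ 2) ψ' Y :=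
    (hasFDerivAt_fst.norm_sq).add (hasFDerivAt_snd.norm_sq)
  have hc : HasDerivAt (fun x : ℝ => Real.sqrt N * (Real.sqrt x)⁻¹) c' S := by
    exact ((Real.hasDerivAt_sqrt hS.ne').inv hsS.ne').const_mul _
  have hφ : HasFDerivAt (fun Z : EuclideanSpace ℝ (Fin (d * k)) × EuclideanSpace ℝ (Fin (d * (N - k))) =>
      Real.sqrt N * (Real.sqrt (‖Z.1‖ ^ 2 + ‖Z.2‖ ^ 2))⁻¹) (c' • ψ') Y :=
    hc.comp_hasFDerivAt (h₂ := fun x : ℝ => Real.sqrt N * (Real.sqrt x)⁻¹)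
      (f := fun Z : EuclideanSpace ℝ (Fin (d * k)) × EuclideanSpace ℝ (Fin (d * (N - k))) => ‖Z.1‖ ^ 2 + ‖Z.2‖ ^ 2) Y hψ
  set L : (EuclideanSpace ℝ (Fin (d * k)) × EuclideanSpace ℝ (Fin (d * (N - k)))) →L[ℝ] (EuclideanSpace ℝ (Fin (d * k)) × EuclideanSpace ℝ (Fin (d * (N - k)))) :=
    ((f • ContinuousLinearMap.fst ℝ (EuclideanSpace ℝ (Fin (d * k))) (EuclideanSpace ℝ (Fin (d * (N - k)))) + (c' • ψ').smulRight Y.1).prod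
      (ContinuousLinearMap.snd ℝ (EuclideanSpace ℝ (Fin (d * k))) (EuclideanSpace ℝ (Fin (d * (N - k)))))) with hLdef
  have hΦfun : Φ = fun Z : EuclideanSpace ℝ (Fin (d * k)) × EuclideanSpace ℝ (Fin (d * (N - k))) =>
      ((Real.sqrt N * (Real.sqrt (‖Z.1‖ ^ 2 + ‖Z.2‖ ^ 2))⁻¹) • Z.1, Z.2) := by
    funext Z
    rw [hΦ Z, div_eq_mul_inv]
  have hD : HasFDerivAt Φ L Y := by
    rw [hΦfun, hLdef]
    have := HasFDerivAt.prodMk (hφ.smul (hasFDerivAt_fst (p := Y) (𝕜 := ℝ)))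
      (hasFDerivAt_snd (p := Y) (𝕜 := ℝ))
    exact this.congr_fderiv (by rw [hfdef, hSdef, div_eq_mul_inv])
  rw [hD.fderiv]
  have hLapp : ∀ x : EuclideanSpace ℝ (Fin (d * k)) × EuclideanSpace ℝ (Fin (d * (N - k))),
      (L : (EuclideanSpace ℝ (Fin (d * k)) × EuclideanSpace ℝ (Fin (d * (N - k)))) →ₗ[ℝ] (EuclideanSpace ℝ (Fin (d * k)) × EuclideanSpace ℝ (Fin (d * (N - k))))) x =
        (f • x.1 + (c' * (2 * inner ℝ Y.1 x.1 + 2 * inner ℝ Y.2 x.2)) • Y.1, x.2) := by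
    intro x
    simp only [hLdef, ContinuousLinearMap.coe_coe, ContinuousLinearMap.prod_apply,
      ContinuousLinearMap.add_apply, ContinuousLinearMap.coe_smul',
      Pi.smul_apply, ContinuousLinearMap.coe_fst', ContinuousLinearMap.smulRight_apply,
      ContinuousLinearMap.coe_snd', hψ'def, ContinuousLinearMap.smul_apply,
      ContinuousLinearMap.coe_comp', Function.comp_apply, innerSL_apply_apply, smul_eq_mul]
    simp [nsmul_eq_mul]
  rw [det_aux f c' hfpos.ne' Y.1 Y.2 _ hLapp]
  have harith : 1 + 2 * c' / f * ‖Y.1‖ ^ 2 = ‖Y.2‖ ^ 2 / S := by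
    have key : ∀ a s : ℝ, 0 < a → 0 < s →
        2 * (a * (-(1 / (2 * s)) / s ^ 2)) / (a / s) = -(1 / (s * s)) := by
      intro a s ha hs
      field_simp
    have hq : 2 * c' / f = -(1 / S) := by
      rw [hc'def, hfdef, key _ _ hsN hsS, Real.mul_self_sqrt hS.le]
    rw [hq, hSdef]
    field_simp
    ring

  rw [harith]
  rw [abs_of_pos]
  positivity
end

section
/- (Normalization constant as a full-space integral) With g(w) = e^{−|w|^{2+α}}/c the normalized density on ℝ^d and Z_N := c^{−N} ∫_{S^{dN−1}(√N)} (Σ_{i=1}^N |v_i|^{2+α})^{−(dN−1)/(2+α)} dσ(V), one has Z_N = ((2+α)/Γ((dN−1)/(2+α))) ∫_{ℝ^{dN}} (∏_{i=1}^N g(w_i)) / |W| dW. -/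
open Real MeasureTheory Set Metric
open scoped ENNReal

lemma mp_uncurry (N d : ℕ) :
    MeasurePreserving (fun (f : Fin N → Fin d → ℝ) (p : Fin N × Fin d) => f p.1 p.2)
      volume volume := by
  have hmeas : Measurable (fun (f : Fin N → Fin d → ℝ) (p : Fin N × Fin d) => f p.1 p.2) :=
    measurable_pi_lambda _ fun p => (measurable_pi_apply p.2).comp (measurable_pi_apply p.1)
  refine ⟨hmeas, ?_⟩
  refine (Measure.pi_eq fun s hs => ?_).symm
  rw [Measure.map_apply hmeas (MeasurableSet.univ_pi hs)]
  have hpre : (fun (f : Fin N → Fin d → ℝ) (p : Fin N × Fin d) => f p.1 p.2) ⁻¹' (univ.pi s)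
      = univ.pi (fun i => univ.pi fun j => s (i, j)) := by
    ext f
    simp only [Set.mem_preimage, Set.mem_pi, Set.mem_univ, true_implies, Prod.forall]
  rw [hpre, volume_pi_pi]
  simp_rw [volume_pi_pi]
  exact (Fintype.prod_prod_type (f := fun p => volume (s p))).symm

noncomputable def curryME (N d : ℕ) : (Fin N × Fin d → ℝ) ≃ᵐ (Fin N → Fin d → ℝ) where
  toEquiv := Equiv.curry (Fin N) (Fin d) ℝ
  measurable_toFun :=
    measurable_pi_lambda _ fun i => measurable_pi_lambda _ fun j => measurable_pi_apply (i, j)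
  measurable_invFun :=
    measurable_pi_lambda _ fun p => (measurable_pi_apply p.2).comp (measurable_pi_apply p.1)

lemma mp_curryME (N d : ℕ) : MeasurePreserving (curryME N d) volume volume := by
  have h : MeasurePreserving ((curryME N d).symm) volume volume := mp_uncurry N d
  simpa using h.symm (curryME N d).symm

noncomputable def Phi (N d : ℕ) :
    EuclideanSpace ℝ (Fin N × Fin d) ≃ᵐ (Fin N → EuclideanSpace ℝ (Fin d)) :=
  (MeasurableEquiv.toLp 2 (Fin N × Fin d → ℝ)).symm.trans ((curryME N d).trans
    (MeasurableEquiv.piCongrRight fun _ : Fin N => (MeasurableEquiv.toLp 2 (Fin d → ℝ)).symm.symm))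

lemma mp_Phi (N d : ℕ) : MeasurePreserving (Phi N d) volume volume := by
  have h1 := EuclideanSpace.volume_preserving_symm_measurableEquiv_toLp (Fin N × Fin d)
  have h2 := mp_curryME N d
  have h3 : MeasurePreserving
      (MeasurableEquiv.piCongrRight fun _ : Fin N => (MeasurableEquiv.toLp 2 (Fin d → ℝ)).symm.symm)
      volume volume :=
    measurePreserving_pi _ _ fun _ =>
      (EuclideanSpace.volume_preserving_symm_measurableEquiv_toLp (Fin d)).symm
  exact (h3.comp h2).comp h1

lemma polar_lintegral {E : Type*} [NormedAddCommGroup E] [NormedSpace ℝ E] [MeasurableSpace E]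
    [BorelSpace E] [FiniteDimensional ℝ E] [Nontrivial E]
    (μ : Measure E) [μ.IsAddHaarMeasure] (F : E → ℝ≥0∞) (hF : Measurable F) :
    ∫⁻ x, F x ∂μ = ∫⁻ ω : sphere (0:E) 1,
      ∫⁻ r in Ioi (0:ℝ), ENNReal.ofReal (r ^ (Module.finrank ℝ E - 1)) * F (r • (ω:E)) ∂volume
      ∂μ.toSphere := by
  have hsm : Measurable (fun p : sphere (0:E) 1 × Ioi (0:ℝ) => F ((p.2 : ℝ) • (p.1 : E))) :=
    hF.comp ((continuous_subtype_val.comp continuous_snd).smul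
      (continuous_subtype_val.comp continuous_fst)).measurable
  calc ∫⁻ x, F x ∂μ
      = ∫⁻ x : ({(0:E)}ᶜ : Set E), F x ∂(μ.comap (↑)) := by
        rw [lintegral_subtype_comap (measurableSet_singleton (0:E)).compl,
          restrict_compl_singleton _]
    _ = ∫⁻ p : sphere (0:E) 1 × Ioi (0:ℝ), F ((p.2 : ℝ) • (p.1 : E))
          ∂(μ.toSphere.prod (Measure.volumeIoiPow (Module.finrank ℝ E - 1))) := by
        rw [← (μ.measurePreserving_homeomorphUnitSphereProd).lintegral_comp hsm]
        refine lintegral_congr fun x => ?_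
        congr 1
        simp [homeomorphUnitSphereProd, smul_inv_smul₀ (norm_ne_zero_iff.2 x.2)]
    _ = ∫⁻ ω : sphere (0:E) 1, ∫⁻ r : Ioi (0:ℝ), F ((r:ℝ) • (ω:E))
          ∂(Measure.volumeIoiPow (Module.finrank ℝ E - 1)) ∂μ.toSphere :=
        lintegral_prod _ hsm.aemeasurable
    _ = _ := by
        refine lintegral_congr fun ω => ?_
        rw [Measure.volumeIoiPow,
          lintegral_withDensity_eq_lintegral_mul _
            ((measurable_subtype_coe.pow_const _).ennreal_ofReal)
            (show Measurable fun r : Ioi (0:ℝ) => F ((r:ℝ) • (ω:E)) from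
              hF.comp (measurable_subtype_coe.smul_const _))]
        simp only [Pi.mul_apply]
        exact lintegral_subtype_comap measurableSet_Ioi
          (fun r : ℝ => ENNReal.ofReal (r ^ (Module.finrank ℝ E - 1)) * F (r • (ω:E)))

/-- Normalization constant as a full-space integral:
`Z_N := c^{-N} ∫_{S^{dN-1}(√N)} (Σ |v_i|^{2+α})^{-(dN-1)/(2+α)} dσ`
equals `((2+α)/Γ((dN-1)/(2+α))) ∫_{ℝ^{dN}} (∏ g(w_i))/|W| dW`, where
`g = e^{-|w|^{2+α}}/c`.  The sphere integral is written via the uniform surface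
measure on the unit sphere and scaling by the radius `√N`. -/
theorem normalization_constant_full_space (d N : ℕ) (hd : 1 ≤ d) (hN : 1 ≤ N)
    (α : ℝ) (hα : 0 < α) (hdN : 1 < d * N)
    (c : ℝ) (hc : c = ∫ w : EuclideanSpace ℝ (Fin d), Real.exp (-‖w‖ ^ (2 + α)))
    (g : EuclideanSpace ℝ (Fin d) → ℝ)
    (hg : ∀ w, g w = Real.exp (-‖w‖ ^ (2 + α)) / c) :
    c ^ (-(N : ℤ)) *
      ((Real.sqrt N) ^ (d * N - 1) *
        ∫ ω : Metric.sphere (0 : EuclideanSpace ℝ (Fin N × Fin d)) 1,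
          (∑ i : Fin N,
            (Real.sqrt N *
              Real.sqrt (∑ j, ((ω : EuclideanSpace ℝ (Fin N × Fin d)) (i, j)) ^ 2)) ^
              (2 + α)) ^ (-((d * N : ℝ) - 1) / (2 + α)) ∂volume.toSphere) =
      ((2 + α) / Real.Gamma (((d * N : ℝ) - 1) / (2 + α))) *
        ∫ W : Fin N → EuclideanSpace ℝ (Fin d),
          (∏ i, g (W i)) / Real.sqrt (∑ i, ‖W i‖ ^ 2) := by
  haveI : Nonempty (Fin N) := ⟨⟨0, hN⟩⟩
  haveI : Nonempty (Fin d) := ⟨⟨0, hd⟩⟩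
  set E := EuclideanSpace ℝ (Fin N × Fin d) with hE_def
  haveI : Nontrivial E := by infer_instance
  set q : ℝ := 2 + α with hq_def
  have hq : 0 < q := by positivity
  have hq1 : (1:ℝ) ≤ q := by rw [hq_def]; linarith
  set s : ℝ := ((d * N : ℝ) - 1) / q with hs_def
  have hdN2 : (2:ℝ) ≤ (d:ℝ) * N := by
    have : (2:ℕ) ≤ d * N := hdN
    exact_mod_cast this
  have hs_pos : 0 < s := by
    apply div_pos _ hq; linarith
  have hΓ : 0 < Real.Gamma s := Real.Gamma_pos_of_pos hs_pos
  have hn : Module.finrank ℝ E = d * N := by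
    show Module.finrank ℝ (EuclideanSpace ℝ (Fin N × Fin d)) = d * N
    rw [finrank_euclideanSpace]
    simp [mul_comm]
  have hcast : ((d * N : ℕ) : ℝ) = (d:ℝ) * N := by push_cast; ring
  have hcast1 : ((d * N - 1 : ℕ) : ℝ) = (d:ℝ) * N - 1 := by
    push_cast [Nat.cast_sub hdN.le]; ring
  -- the radial profile
  set h : E → ℝ := fun x => ∑ i : Fin N, Real.sqrt (∑ j, (x (i,j))^2) ^ q with hh_def
  have hh_nonneg : ∀ x, 0 ≤ h x := fun x =>
    Finset.sum_nonneg fun i _ => Real.rpow_nonneg (Real.sqrt_nonneg _) _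
  have hrpow_meas : Measurable fun t : ℝ => t ^ q := by fun_prop
  have hrpow_meas' : Measurable fun t : ℝ => t ^ (-s) := by fun_prop
  have hh_meas : Measurable h :=
    Finset.measurable_sum _ fun i _ => hrpow_meas.comp
      ((Finset.measurable_sum _ fun j _ => ((measurable_pi_apply (i,j)).comp (WithLp.measurable_ofLp 2 _)).pow_const 2).sqrt)
  have hh_pos : ∀ x : E, x ≠ 0 → 0 < h x := by
    intro x hx
    obtain ⟨p, hp⟩ : ∃ p, x p ≠ 0 := by
      by_contra hco
      push_neg at hco
      exact hx (PiLp.ext fun p => hco p)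
    refine Finset.sum_pos' (fun i _ => Real.rpow_nonneg (Real.sqrt_nonneg _) _)
      ⟨p.1, Finset.mem_univ _, ?_⟩
    apply Real.rpow_pos_of_pos
    apply Real.sqrt_pos.2
    refine Finset.sum_pos' (fun j _ => sq_nonneg _) ⟨p.2, Finset.mem_univ _, ?_⟩
    have : x (p.1, p.2) ≠ 0 := by rw [Prod.mk.eta]; exact hp
    positivity
  have hh_homog : ∀ (r:ℝ), 0 ≤ r → ∀ x : E, h (r • x) = r ^ q * h x := by
    intro r hr x
    simp only [hh_def]
    rw [Finset.mul_sum]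
    refine Finset.sum_congr rfl fun i _ => ?_
    have hsm : ∀ j, ((r • x) (i,j)) = r * x (i,j) := fun j => rfl
    simp_rw [hsm, mul_pow]
    rw [← Finset.mul_sum, Real.sqrt_mul (sq_nonneg r), Real.sqrt_sq hr,
      Real.mul_rpow hr (Real.sqrt_nonneg _)]
  have hnormE : ∀ x : E, ‖x‖ = Real.sqrt (∑ i : Fin N, ∑ j, (x (i,j))^2) := by
    intro x
    rw [EuclideanSpace.norm_eq]
    congr 1
    rw [Fintype.sum_prod_type]
    exact Finset.sum_congr rfl fun i _ => Finset.sum_congr rfl fun j _ => by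
      rw [Real.norm_eq_abs, sq_abs]
  have hrow : ∀ (x : E) (i : Fin N), ‖Phi N d x i‖ = Real.sqrt (∑ j, (x (i,j))^2) := by
    intro x i
    rw [EuclideanSpace.norm_eq]
    congr 1
    refine Finset.sum_congr rfl fun j _ => ?_
    show ‖x (i,j)‖ ^ 2 = _
    rw [Real.norm_eq_abs, sq_abs]
  have hPhinorm : ∀ x : E, Real.sqrt (∑ i, ‖Phi N d x i‖^2) = ‖x‖ := by
    intro x
    rw [hnormE]
    congr 1
    refine Finset.sum_congr rfl fun i _ => ?_
    rw [hrow, Real.sq_sqrt (Finset.sum_nonneg fun j _ => sq_nonneg _)]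
  -- the full-space integrand on E
  set G : E → ℝ := fun x => Real.exp (-(h x)) / ‖x‖ with hG_def
  have hG_meas : Measurable G := (hh_meas.neg.exp).div measurable_norm
  have hG_nonneg : ∀ x, 0 ≤ G x := fun x => div_nonneg (Real.exp_nonneg _) (norm_nonneg _)
  -- transfer the RHS integral to E
  have hRHS : (∫ W : Fin N → EuclideanSpace ℝ (Fin d), (∏ i, g (W i)) / Real.sqrt (∑ i, ‖W i‖ ^ 2))
      = (c ^ N)⁻¹ * ∫ x : E, G x := by
    rw [← (mp_Phi N d).integral_comp (Phi N d).measurableEmbedding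
        (fun W => (∏ i, g (W i)) / Real.sqrt (∑ i, ‖W i‖ ^ 2)), ← integral_const_mul]
    refine integral_congr_ae (Filter.Eventually.of_forall fun x => ?_)
    have hprod : (∏ i, g (Phi N d x i)) = Real.exp (-(h x)) / c ^ N := by
      simp_rw [hg]
      rw [Finset.prod_div_distrib, Finset.prod_const, ← Real.exp_sum]
      congr 2
      · rw [← Finset.sum_neg_distrib]
        refine Finset.sum_congr rfl fun i _ => ?_
        rw [hrow]
      · simp [Finset.card_univ]
    show (∏ i, g (Phi N d x i)) / Real.sqrt (∑ i, ‖Phi N d x i‖ ^ 2) = (c^N)⁻¹ * G x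
    rw [hprod, hPhinorm, hG_def]
    ring
  -- the sphere lintegral
  have hω_ne : ∀ ω : sphere (0:E) 1, (ω:E) ≠ 0 := fun ω => ne_of_mem_sphere ω.2 one_ne_zero
  have hω_norm : ∀ ω : sphere (0:E) 1, ‖(ω:E)‖ = 1 := fun ω => mem_sphere_zero_iff_norm.mp ω.2
  have hsphmeas : Measurable fun ω : sphere (0:E) 1 => ENNReal.ofReal ((h ω) ^ (-s)) :=
    (hrpow_meas'.comp (hh_meas.comp measurable_subtype_coe)).ennreal_ofReal
  set Lsph : ℝ≥0∞ := ∫⁻ ω : sphere (0:E) 1, ENNReal.ofReal ((h ω) ^ (-s)) ∂volume.toSphere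
    with hL_def
  set C : ℝ := (1/q) * Real.Gamma s with hC_def
  have hC_pos : 0 < C := by positivity
  have hinner : ∀ ω : sphere (0:E) 1,
      (∫⁻ r in Ioi (0:ℝ), ENNReal.ofReal (r ^ (d * N - 1)) * ENNReal.ofReal (G (r • (ω:E))))
        = ENNReal.ofReal ((h ω) ^ (-s) * C) := by
    intro ω
    have hb : 0 < h ω := hh_pos _ (hω_ne ω)
    have hq2 : (-1:ℝ) < (d:ℝ)*N - 2 := by linarith
    rw [setLIntegral_congr_fun_ae measurableSet_Ioi
      (Filter.Eventually.of_forall (fun r (hr : r ∈ Ioi (0:ℝ)) => ?_))]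
    rotate_left
    · exact fun r => ENNReal.ofReal (r ^ ((d:ℝ)*N - 2) * Real.exp (-(h ω) * r ^ q))
    · -- pointwise identity
      rw [mem_Ioi] at hr
      rw [← ENNReal.ofReal_mul (by positivity)]
      congr 1
      have hnorm_smul : ‖r • (ω:E)‖ = r := by
        rw [norm_smul, hω_norm, mul_one, Real.norm_eq_abs, abs_of_pos hr]
      show r ^ (d*N-1) * (Real.exp (-(h (r • (ω:E)))) / ‖r • (ω:E)‖) = _
      rw [hh_homog r hr.le, hnorm_smul,
        show -(r ^ q * h ω) = -(h ω) * r ^ q by ring]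
      have hpow : (r:ℝ) ^ (d*N - 1) / r = r ^ ((d:ℝ)*N - 2) := by
        rw [← Real.rpow_natCast r (d*N-1), hcast1, div_eq_iff hr.ne',
          ← Real.rpow_add_one hr.ne', show (d:ℝ)*N - 2 + 1 = (d:ℝ)*N - 1 by ring]
      rw [← hpow]
      ring
    · rw [← ofReal_integral_eq_lintegral_ofReal
        (integrableOn_rpow_mul_exp_neg_mul_rpow hq2 hq hb)
        ((ae_restrict_iff' measurableSet_Ioi).2 (Filter.Eventually.of_forall
          fun r hr => by have : (0:ℝ) < r := hr; positivity)),
        integral_rpow_mul_exp_neg_mul_rpow hq hq2 hb]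
      congr 1
      rw [show ((d:ℝ)*N - 2) + 1 = (d:ℝ)*N - 1 by ring, hC_def, hs_def]
      rw [show -((d:ℝ)*N-1)/q = -(((d:ℝ)*N-1)/q) by ring]
      ring
  -- full-space integral via polar coordinates
  have hA : ∫ x : E, G x = C * Lsph.toReal := by
    rw [integral_eq_lintegral_of_nonneg_ae (Filter.Eventually.of_forall hG_nonneg)
      hG_meas.aestronglyMeasurable]
    rw [polar_lintegral volume (fun x => ENNReal.ofReal (G x)) hG_meas.ennreal_ofReal]
    simp_rw [hn]
    rw [lintegral_congr hinner]
    have hsplit : ∀ ω : sphere (0:E) 1, ENNReal.ofReal ((h ω)^(-s) * C)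
        = ENNReal.ofReal ((h ω)^(-s)) * ENNReal.ofReal C :=
      fun ω => ENNReal.ofReal_mul (Real.rpow_nonneg (hh_nonneg _) _)
    rw [lintegral_congr hsplit, lintegral_mul_const _ hsphmeas, ENNReal.toReal_mul,
      ENNReal.toReal_ofReal hC_pos.le, mul_comm]
  -- simplify the sphere integrand on the LHS
  have hN0 : (0:ℝ) < N := by exact_mod_cast hN
  have hsq : (0:ℝ) < Real.sqrt N := Real.sqrt_pos.2 hN0
  have hsph_int : ∀ ω : sphere (0:E) 1,
      (∑ i : Fin N, (Real.sqrt N * Real.sqrt (∑ j, ((ω:E) (i,j))^2)) ^ q) ^ (-((d*N:ℝ)-1)/q)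
        = ((Real.sqrt N) ^ q) ^ (-s) * (h ω) ^ (-s) := by
    intro ω
    have hterm : ∀ i : Fin N, (Real.sqrt N * Real.sqrt (∑ j, ((ω:E) (i,j))^2)) ^ q
        = (Real.sqrt N)^q * Real.sqrt (∑ j, ((ω:E) (i,j))^2) ^ q :=
      fun i => Real.mul_rpow (Real.sqrt_nonneg _) (Real.sqrt_nonneg _)
    rw [Finset.sum_congr rfl (fun i _ => hterm i), ← Finset.mul_sum,
      show -((d*N:ℝ)-1)/q = -s by rw [hs_def]; ring]
    exact Real.mul_rpow (Real.rpow_nonneg (Real.sqrt_nonneg _) _) (hh_nonneg _)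
  have hpref : (Real.sqrt N) ^ (d*N-1) * ((Real.sqrt N)^q)^(-s) = 1 := by
    rw [← Real.rpow_natCast (Real.sqrt N) (d*N-1), ← Real.rpow_mul hsq.le,
      ← Real.rpow_add hsq, hcast1]
    rw [show ((d:ℝ)*N - 1) + q * (-s) = 0 by rw [hs_def]; field_simp; ring]
    exact Real.rpow_zero _
  have hLHS : (Real.sqrt N) ^ (d*N-1) *
      (∫ ω : sphere (0:E) 1,
        (∑ i : Fin N, (Real.sqrt N * Real.sqrt (∑ j, ((ω:E) (i,j))^2)) ^ q) ^ (-((d*N:ℝ)-1)/q)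
        ∂volume.toSphere) = Lsph.toReal := by
    rw [integral_congr_ae (Filter.Eventually.of_forall hsph_int), integral_const_mul,
      ← mul_assoc, hpref, one_mul]
    rw [integral_eq_lintegral_of_nonneg_ae
      (Filter.Eventually.of_forall fun ω => Real.rpow_nonneg (hh_nonneg _) _)
      (hrpow_meas'.comp (hh_meas.comp measurable_subtype_coe)).aestronglyMeasurable]
  rw [hRHS, hA, hLHS, show c ^ (-(N:ℤ)) = (c^N)⁻¹ by rw [zpow_neg, zpow_natCast]]
  rw [hC_def]
  have h1 : q * (1/q) = 1 := by field_simp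
  have h2 : (Real.Gamma s)⁻¹ * Real.Gamma s = 1 := inv_mul_cancel₀ hΓ.ne'
  rw [show q / Real.Gamma s * ((c ^ N)⁻¹ * (1 / q * Real.Gamma s * Lsph.toReal))
      = (q * (1/q)) * ((Real.Gamma s)⁻¹ * Real.Gamma s) * ((c ^ N)⁻¹ * Lsph.toReal) by ring,
    h1, h2, one_mul, one_mul]
end
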